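/- arXiv:0809.1144 — 7 statements merged into one kernel-verified Lean document; each statement's English description precedes it below -/
import Mathlib

section
/- Let (V, μ, Δ) be an infinitesimal bialgebra in the sense of Joni–Rota (θ = 0 compatibility: Δ∘μ = (μ ⊗ id)∘(id ⊗ Δ) + (id ⊗ μ)∘(Δ ⊗ id)). Define m(x, y) = Σ_{(y)} μ(μ(y_{(1)} ⊗ x) ⊗ y_{(2)}) using Sweedler notation Δ(y) = Σ y_{(1)} ⊗ y_{(2)}. Then m is a (left) preLie product: m(x, m(y,z)) − m(m(x,y), z) = m(y, m(x,z)) − m(m(y,x), z) for all x, y, z ∈ V. -/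
open TensorProduct

section Aux

variable {K : Type*} [Field K] {V : Type*} [AddCommGroup V] [Module K V]
variable (μ : V ⊗[K] V →ₗ[K] V)

private noncomputable def rmul (x : V) : V →ₗ[K] V := μ ∘ₗ (TensorProduct.mk K V V).flip x

private noncomputable def Lmap (x : V) : V ⊗[K] V →ₗ[K] V :=
  μ ∘ₗ TensorProduct.map (μ ∘ₗ (TensorProduct.mk K V V).flip x) LinearMap.id

private noncomputable def Gmap (x y : V) : V ⊗[K] (V ⊗[K] V) →ₗ[K] V :=
  μ ∘ₗ TensorProduct.map μ LinearMap.id ∘ₗ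
    (TensorProduct.assoc K V V V).symm.toLinearMap ∘ₗ
    TensorProduct.map (rmul μ y) (TensorProduct.map (rmul μ x) LinearMap.id)

private noncomputable def Hmap (x y : V) : (V ⊗[K] V) ⊗[K] V →ₗ[K] V :=
  μ ∘ₗ TensorProduct.map (μ ∘ₗ TensorProduct.map (rmul μ x) (rmul μ y)) LinearMap.id

private lemma rmul_apply (x a : V) : rmul μ x a = μ (a ⊗ₜ[K] x) := rfl

private lemma Lmap_tmul (x a b : V) :
    Lmap μ x (a ⊗ₜ[K] b) = μ (μ (a ⊗ₜ[K] x) ⊗ₜ[K] b) := rfl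

private lemma Gmap_tmul (x y a b c : V) :
    Gmap μ x y (a ⊗ₜ[K] (b ⊗ₜ[K] c)) =
      μ (μ (μ (a ⊗ₜ[K] y) ⊗ₜ[K] μ (b ⊗ₜ[K] x)) ⊗ₜ[K] c) := rfl

private lemma Hmap_tmul (x y a b c : V) :
    Hmap μ x y ((a ⊗ₜ[K] b) ⊗ₜ[K] c) =
      μ (μ (μ (a ⊗ₜ[K] x) ⊗ₜ[K] μ (b ⊗ₜ[K] y)) ⊗ₜ[K] c) := rfl

private lemma S1 (hassoc : ∀ x y z : V, μ (μ (x ⊗ₜ[K] y) ⊗ₜ[K] z) = μ (x ⊗ₜ[K] μ (y ⊗ₜ[K] z))) (x y a : V) (w : V ⊗[K] V) :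
    Lmap μ x (TensorProduct.map μ LinearMap.id
      ((TensorProduct.assoc K V V V).symm (μ (a ⊗ₜ[K] y) ⊗ₜ[K] w))) =
      Gmap μ x y (a ⊗ₜ[K] w) := by
  induction w using TensorProduct.induction_on with
  | zero => simp
  | tmul b c =>
      simp only [assoc_symm_tmul, map_tmul, LinearMap.id_coe, id_eq,
        Lmap_tmul, Gmap_tmul]
      rw [hassoc (μ (a ⊗ₜ[K] y)) b x]
  | add w₁ w₂ h1 h2 => simp only [tmul_add, map_add, h1, h2]

private lemma S2 (hassoc : ∀ x y z : V, μ (μ (x ⊗ₜ[K] y) ⊗ₜ[K] z) = μ (x ⊗ₜ[K] μ (y ⊗ₜ[K] z))) (x a b : V) (w : V ⊗[K] V) :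
    Lmap μ x (TensorProduct.map LinearMap.id μ
      ((TensorProduct.assoc K V V V)
        ((TensorProduct.map μ LinearMap.id
          ((TensorProduct.assoc K V V V).symm (a ⊗ₜ[K] w))) ⊗ₜ[K] b))) =
      μ (μ (a ⊗ₜ[K] Lmap μ x w) ⊗ₜ[K] b) := by
  induction w using TensorProduct.induction_on with
  | zero => simp
  | tmul p q =>
      simp only [assoc_symm_tmul, map_tmul, LinearMap.id_coe, id_eq, assoc_tmul,
        Lmap_tmul]
      rw [← hassoc (μ (μ (a ⊗ₜ[K] p) ⊗ₜ[K] x)) q b, ← hassoc a (μ (p ⊗ₜ[K] x)) q,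
        ← hassoc a p x]
  | add w₁ w₂ h1 h2 =>
      simp only [tmul_add, map_add, add_tmul, h1, h2, tmul_add]

private lemma S3 (hassoc : ∀ x y z : V, μ (μ (x ⊗ₜ[K] y) ⊗ₜ[K] z) = μ (x ⊗ₜ[K] μ (y ⊗ₜ[K] z))) (x y b : V) (w : V ⊗[K] V) :
    Lmap μ x (TensorProduct.map LinearMap.id μ
      ((TensorProduct.assoc K V V V)
        ((TensorProduct.map LinearMap.id μ
          ((TensorProduct.assoc K V V V) (w ⊗ₜ[K] y))) ⊗ₜ[K] b))) =
      Hmap μ x y (w ⊗ₜ[K] b) := by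
  induction w using TensorProduct.induction_on with
  | zero => simp
  | tmul p q =>
      simp only [assoc_tmul, map_tmul, LinearMap.id_coe, id_eq, Lmap_tmul, Hmap_tmul]
      rw [hassoc (μ (p ⊗ₜ[K] x)) (μ (q ⊗ₜ[K] y)) b]
  | add w₁ w₂ h1 h2 =>
      simp only [add_tmul, map_add, h1, h2]

private lemma HG (x y : V) (s : V ⊗[K] (V ⊗[K] V)) :
    Hmap μ x y ((TensorProduct.assoc K V V V).symm s) = Gmap μ y x s := by
  induction s using TensorProduct.induction_on with
  | zero => simp
  | tmul a w =>
      induction w using TensorProduct.induction_on with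
      | zero => simp
      | tmul b c => simp [assoc_symm_tmul, Hmap_tmul, Gmap_tmul]
      | add w₁ w₂ h1 h2 => simp only [tmul_add, map_add, h1, h2]
  | add s₁ s₂ h1 h2 => simp only [map_add, h1, h2]

private lemma main_lemma
    (hassoc : ∀ x y z : V, μ (μ (x ⊗ₜ[K] y) ⊗ₜ[K] z) = μ (x ⊗ₜ[K] μ (y ⊗ₜ[K] z)))
    (Δ : V →ₗ[K] V ⊗[K] V)
    (hcompat : ∀ x y : V, Δ (μ (x ⊗ₜ[K] y)) =
      TensorProduct.map μ LinearMap.id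
          ((TensorProduct.assoc K V V V).symm (x ⊗ₜ[K] Δ y)) +
        TensorProduct.map LinearMap.id μ
          ((TensorProduct.assoc K V V V) (Δ x ⊗ₜ[K] y)))
    (x y : V) (t : V ⊗[K] V) :
    Lmap μ x (Δ (Lmap μ y t)) =
      Lmap μ (Lmap μ x (Δ y)) t + Gmap μ x y (TensorProduct.map LinearMap.id Δ t)
        + Hmap μ x y (TensorProduct.map Δ LinearMap.id t) := by
  induction t using TensorProduct.induction_on with
  | zero => simp
  | tmul a b =>
      rw [Lmap_tmul, hcompat (μ (a ⊗ₜ[K] y)) b, map_add, S1 μ hassoc,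
        hcompat a y, add_tmul]
      simp only [map_add]
      rw [S2 μ hassoc, S3 μ hassoc]
      simp only [map_tmul, LinearMap.id_coe, id_eq, Lmap_tmul]
      abel
  | add t₁ t₂ h1 h2 =>
      simp only [map_add, h1, h2]
      abel

end Aux

/-- Aguiar: any (Joni–Rota) infinitesimal bialgebra gives a preLie product
m(x,y) = Σ μ(μ(y₍₁₎ ⊗ x) ⊗ y₍₂₎). -/
theorem stmt_4 (K : Type*) [Field K] (V : Type*) [AddCommGroup V] [Module K V]
    (μ : V ⊗[K] V →ₗ[K] V)
    (hassoc : ∀ x y z : V, μ (μ (x ⊗ₜ[K] y) ⊗ₜ[K] z) = μ (x ⊗ₜ[K] μ (y ⊗ₜ[K] z)))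
    (Δ : V →ₗ[K] V ⊗[K] V)
    (hcoassoc : ∀ x : V,
      (TensorProduct.assoc K V V V) (TensorProduct.map Δ LinearMap.id (Δ x)) =
        TensorProduct.map LinearMap.id Δ (Δ x))
    (hcompat : ∀ x y : V, Δ (μ (x ⊗ₜ[K] y)) =
      TensorProduct.map μ LinearMap.id
          ((TensorProduct.assoc K V V V).symm (x ⊗ₜ[K] Δ y)) +
        TensorProduct.map LinearMap.id μ
          ((TensorProduct.assoc K V V V) (Δ x ⊗ₜ[K] y)))
    (m : V → V → V)
    (hm : ∀ x y : V, m x y =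
      μ (TensorProduct.map (μ ∘ₗ (TensorProduct.mk K V V).flip x) LinearMap.id (Δ y))) :
    ∀ x y z : V,
      m x (m y z) - m (m x y) z = m y (m x z) - m (m y x) z := by
  intro x y z
  have hmL : ∀ x y : V, m x y = Lmap μ x (Δ y) := fun x y => hm x y
  have hcoassoc' : TensorProduct.map Δ LinearMap.id (Δ z) =
      (TensorProduct.assoc K V V V).symm (TensorProduct.map LinearMap.id Δ (Δ z)) := by
    rw [← hcoassoc z, LinearEquiv.symm_apply_apply]
  have key : ∀ u v : V,
      m u (m v z) = m (m u v) z
        + Gmap μ u v (TensorProduct.map LinearMap.id Δ (Δ z))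
        + Gmap μ v u (TensorProduct.map LinearMap.id Δ (Δ z)) := by
    intro u v
    rw [hmL u (m v z), hmL v z, main_lemma μ hassoc Δ hcompat u v (Δ z),
      hcoassoc', HG, ← hmL u v, ← hmL (m u v) z]
  rw [key x y, key y x]
  abel
end

section
/- Kaplansky's first construction yields a bialgebra: with Ṽ = V ⊕ K·e₁, the multiplication μ₁ extending μ with new unit e₁, the comultiplication Δ₁ given by Δ₁(e₁) = e₁ ⊗ e₁ and Δ₁(x) = x ⊗ e₁ + e₁ ⊗ x − e₂ ⊗ x for x ∈ V, and counit ε₁ with ε₁(e₁) = 1, ε₁(x) = 0 for x ∈ V, the tuple (Ṽ, μ₁, η₁, Δ₁, ε₁) is a bialgebra (Δ₁ is coassociative, ε₁ is a counit, and Δ₁, ε₁ are algebra morphisms). -/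
open TensorProduct

/-- Kaplansky's first construction (Ṽ = V ⊕ K·e₁, μ₁, Δ₁, ε₁) is a bialgebra:
Δ₁ is coassociative, ε₁ is a counit, and Δ₁, ε₁ are algebra morphisms. -/
theorem stmt_7 (K : Type*) [Field K] (V : Type*) [AddCommGroup V] [Module K V]
    (μ : V ⊗[K] V →ₗ[K] V) (e₂ : V)
    (hassoc : ∀ x y z : V, μ (μ (x ⊗ₜ[K] y) ⊗ₜ[K] z) = μ (x ⊗ₜ[K] μ (y ⊗ₜ[K] z)))
    (hunitl : ∀ x : V, μ (e₂ ⊗ₜ[K] x) = x)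
    (hunitr : ∀ x : V, μ (x ⊗ₜ[K] e₂) = x)
    (μ₁ : (V × K) ⊗[K] (V × K) →ₗ[K] V × K)
    (hμ₁ : ∀ (v w : V) (a b : K),
      μ₁ ((v, a) ⊗ₜ[K] (w, b)) = (μ (v ⊗ₜ[K] w) + a • w + b • v, a * b))
    (Δ₁ : (V × K) →ₗ[K] (V × K) ⊗[K] (V × K))
    (hΔ₁ : ∀ (v : V) (a : K), Δ₁ (v, a) =
      a • (((0 : V), (1 : K)) ⊗ₜ[K] ((0 : V), (1 : K))) +
        (v, (0 : K)) ⊗ₜ[K] ((0 : V), (1 : K)) +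
        ((0 : V), (1 : K)) ⊗ₜ[K] (v, (0 : K)) -
        (e₂, (0 : K)) ⊗ₜ[K] (v, (0 : K)))
    (ε₁ : (V × K) →ₗ[K] K) (hε₁ : ∀ (v : V) (a : K), ε₁ (v, a) = a) :
    (∀ x : V × K,
      (TensorProduct.assoc K (V × K) (V × K) (V × K))
          (TensorProduct.map Δ₁ LinearMap.id (Δ₁ x)) =
        TensorProduct.map LinearMap.id Δ₁ (Δ₁ x)) ∧
    (∀ x : V × K,
      (TensorProduct.lid K (V × K)) (TensorProduct.map ε₁ LinearMap.id (Δ₁ x)) = x) ∧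
    (∀ x : V × K,
      (TensorProduct.rid K (V × K)) (TensorProduct.map LinearMap.id ε₁ (Δ₁ x)) = x) ∧
    (∀ x y : V × K, Δ₁ (μ₁ (x ⊗ₜ[K] y)) =
      TensorProduct.map μ₁ μ₁
        ((TensorProduct.tensorTensorTensorComm K (V × K) (V × K) (V × K) (V × K))
          (Δ₁ x ⊗ₜ[K] Δ₁ y))) ∧
    (∀ x y : V × K, ε₁ (μ₁ (x ⊗ₜ[K] y)) = ε₁ x * ε₁ y) := by
  have hs : ∀ (a : K) (w : V), ((a • w, (0:K)) : V × K) = a • ((w, (0:K)) : V × K) := by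
    intro a w; ext <;> simp
  have hp : ∀ (x y : V) (a : K), ((x + y, a) : V × K) = ((x, (0:K)) : V×K) + ((y, a) : V×K) := by
    intro x y a; ext <;> simp
  have hzz : (((0:V), (0:K)) : V × K) = 0 := rfl
  refine ⟨?_, ?_, ?_, ?_, ?_⟩
  · rintro ⟨v, a⟩
    simp only [hΔ₁, hμ₁, hunitl, hunitr, map_add, map_sub, map_smul, map_zero, TensorProduct.map_tmul, TensorProduct.assoc_tmul, TensorProduct.tensorTensorTensorComm_tmul, LinearMap.id_coe, id_eq, tmul_add, add_tmul, tmul_sub, sub_tmul, smul_tmul, tmul_smul, smul_zero, zero_smul, one_smul, mul_zero, zero_mul, mul_one, one_mul, add_zero, zero_add, zero_tmul, tmul_zero, smul_smul, hzz]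
    try simp only [hs, hp, hunitl, hunitr, tmul_add, add_tmul, tmul_sub, sub_tmul, smul_tmul, tmul_smul, smul_zero, zero_smul, one_smul, add_zero, zero_add, zero_tmul, tmul_zero, map_zero, hzz]
    module
  · rintro ⟨v, a⟩
    simp only [hΔ₁, hε₁, map_add, map_sub, map_smul, TensorProduct.map_tmul,
      TensorProduct.lid_tmul, LinearMap.id_coe, id_eq,
      one_smul, zero_smul, smul_zero, zero_tmul, tmul_zero]
    ext <;> simp
  · rintro ⟨v, a⟩
    simp only [hΔ₁, hε₁, map_add, map_sub, map_smul, TensorProduct.map_tmul,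
      TensorProduct.rid_tmul, LinearMap.id_coe, id_eq,
      one_smul, zero_smul, smul_zero, zero_tmul, tmul_zero]
    ext <;> simp
  · rintro ⟨v, a⟩ ⟨w, b⟩
    simp only [hΔ₁, hμ₁, hunitl, hunitr, map_add, map_sub, map_smul, map_zero, TensorProduct.map_tmul, TensorProduct.assoc_tmul, TensorProduct.tensorTensorTensorComm_tmul, LinearMap.id_coe, id_eq, tmul_add, add_tmul, tmul_sub, sub_tmul, smul_tmul, tmul_smul, smul_zero, zero_smul, one_smul, mul_zero, zero_mul, mul_one, one_mul, add_zero, zero_add, zero_tmul, tmul_zero, smul_smul, hzz]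
    try simp only [hs, hp, hunitl, hunitr, tmul_add, add_tmul, tmul_sub, sub_tmul, smul_tmul, tmul_smul, smul_zero, zero_smul, one_smul, add_zero, zero_add, zero_tmul, tmul_zero, map_zero, hzz]
    module
  · rintro ⟨v, a⟩ ⟨w, b⟩
    simp [hμ₁, hε₁]
end

section
/- Kaplansky's first construction yields a unital infinitesimal bialgebra: with notation as in the construction, Δ₁(μ₁(x ⊗ y)) = (x ⊗ e₁)·Δ₁(y) + Δ₁(x)·(e₁ ⊗ y) − x ⊗ y for all x, y ∈ Ṽ, where · is the componentwise product on Ṽ ⊗ Ṽ induced by μ₁. -/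
open TensorProduct

set_option maxHeartbeats 1000000 in
set_option synthInstance.maxHeartbeats 400000 in
/-- Kaplansky's first construction is a unital infinitesimal bialgebra:
Δ₁(μ₁(x⊗y)) = (x ⊗ e₁)·Δ₁(y) + Δ₁(x)·(e₁ ⊗ y) − x ⊗ y on Ṽ = V ⊕ K·e₁. -/
theorem stmt_8 (K : Type*) [Field K] (V : Type*) [AddCommGroup V] [Module K V]
    (μ : V ⊗[K] V →ₗ[K] V) (e₂ : V)
    (hassoc : ∀ x y z : V, μ (μ (x ⊗ₜ[K] y) ⊗ₜ[K] z) = μ (x ⊗ₜ[K] μ (y ⊗ₜ[K] z)))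
    (hunitl : ∀ x : V, μ (e₂ ⊗ₜ[K] x) = x)
    (hunitr : ∀ x : V, μ (x ⊗ₜ[K] e₂) = x)
    (μ₁ : (V × K) ⊗[K] (V × K) →ₗ[K] V × K)
    (hμ₁ : ∀ (v w : V) (a b : K),
      μ₁ ((v, a) ⊗ₜ[K] (w, b)) = (μ (v ⊗ₜ[K] w) + a • w + b • v, a * b))
    (Δ₁ : (V × K) →ₗ[K] (V × K) ⊗[K] (V × K))
    (hΔ₁ : ∀ (v : V) (a : K), Δ₁ (v, a) =
      a • (((0 : V), (1 : K)) ⊗ₜ[K] ((0 : V), (1 : K))) +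
        (v, (0 : K)) ⊗ₜ[K] ((0 : V), (1 : K)) +
        ((0 : V), (1 : K)) ⊗ₜ[K] (v, (0 : K)) -
        (e₂, (0 : K)) ⊗ₜ[K] (v, (0 : K)))
    -- the componentwise product · on Ṽ ⊗ Ṽ induced by μ₁
    (star : ((V × K) ⊗[K] (V × K)) → ((V × K) ⊗[K] (V × K)) → ((V × K) ⊗[K] (V × K)))
    (hstar : ∀ a b, star a b =
      TensorProduct.map μ₁ μ₁
        ((TensorProduct.tensorTensorTensorComm K (V × K) (V × K) (V × K) (V × K))
          (a ⊗ₜ[K] b))) :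
    ∀ x y : V × K, Δ₁ (μ₁ (x ⊗ₜ[K] y)) =
      star (x ⊗ₜ[K] ((0 : V), (1 : K))) (Δ₁ y) +
        star (Δ₁ x) (((0 : V), (1 : K)) ⊗ₜ[K] y) - x ⊗ₜ[K] y := by
  rintro ⟨v, a⟩ ⟨w, b⟩
  simp only [hstar, hμ₁, hΔ₁, tmul_add, add_tmul, tmul_sub, sub_tmul, tmul_smul, smul_tmul',
    map_add, map_sub, map_smul, tensorTensorTensorComm_tmul, map_tmul]
  simp only [hμ₁, hΔ₁, tmul_zero, zero_tmul, map_zero, smul_zero, zero_smul, add_zero, zero_add,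
    mul_one, one_mul, mul_zero, zero_mul, hunitl, hunitr, smul_smul, Prod.smul_mk,
    Prod.mk_add_mk, smul_eq_mul]
  apply (TensorProduct.prodRight K K (V × K) V K).injective
  simp only [map_add, map_sub, map_neg, map_smul, map_zero, sub_zero, prodRight_tmul,
    Prod.mk_add_mk, Prod.mk_sub_mk, Prod.smul_mk, tmul_add, add_tmul, tmul_smul,
    ← smul_tmul', tmul_zero, zero_tmul, smul_zero, zero_smul, add_zero, zero_add, one_smul,
    smul_eq_mul, mul_one, one_mul, mul_zero, zero_mul, smul_add]
  refine Prod.ext_iff.mpr ⟨?_, ?_⟩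
  · apply (TensorProduct.prodLeft K K V K V).injective
    simp only [map_add, map_sub, map_neg, map_smul, map_zero, sub_zero, prodLeft_tmul,
      Prod.mk_add_mk, Prod.mk_sub_mk, Prod.smul_mk, tmul_add, add_tmul, tmul_smul,
      ← smul_tmul', tmul_zero, zero_tmul, smul_zero, zero_smul, add_zero, zero_add, one_smul,
      smul_eq_mul, mul_one, one_mul, mul_zero, zero_mul, smul_add]
    refine Prod.ext_iff.mpr ⟨?_, ?_⟩
    · module
    · apply (TensorProduct.lid K V).injective
      simp only [map_add, map_sub, map_neg, map_smul, map_zero, sub_zero, lid_tmul,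
        smul_smul, one_smul, smul_zero, zero_smul, add_zero, zero_add, smul_add]
      module
  · apply (TensorProduct.rid K (V × K)).injective
    simp only [map_add, map_sub, map_neg, map_smul, map_zero, sub_zero, rid_tmul,
      smul_smul, one_smul, smul_zero, zero_smul, add_zero, zero_add, smul_add,
      Prod.mk_add_mk, Prod.mk_sub_mk, Prod.smul_mk, smul_eq_mul, mul_one, one_mul,
      mul_zero, zero_mul]
    refine Prod.ext_iff.mpr ⟨by module, by ring⟩
end

section
/- With the same setup of two unital algebras (V, μ₁), (V, μ₂) sharing unit e₂, the extension μ̃₂ of μ₂ to Ṽ = V ⊕ K·e₁ is compatible with the first Kaplansky comultiplication Δ₁ in the bialgebra sense: Δ₁(μ̃₂(x ⊗ y)) = Δ₁(x)·Δ₁(y) for all x, y ∈ Ṽ, where · is the componentwise product on Ṽ ⊗ Ṽ induced by μ̃₂. -/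
open TensorProduct
set_option maxHeartbeats 1600000 in
set_option synthInstance.maxHeartbeats 400000 in

/-- The extension μ̃₂ of μ₂ to Ṽ = V ⊕ K·e₁ is compatible (bialgebra sense) with the
first Kaplansky comultiplication Δ₁. -/
theorem stmt_11 (K : Type*) [Field K] (V : Type*) [AddCommGroup V] [Module K V]
    (μ₁ μ₂ : V ⊗[K] V →ₗ[K] V) (e₂ : V)
    (hassoc₁ : ∀ x y z : V, μ₁ (μ₁ (x ⊗ₜ[K] y) ⊗ₜ[K] z) = μ₁ (x ⊗ₜ[K] μ₁ (y ⊗ₜ[K] z)))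
    (hunitl₁ : ∀ x : V, μ₁ (e₂ ⊗ₜ[K] x) = x)
    (hunitr₁ : ∀ x : V, μ₁ (x ⊗ₜ[K] e₂) = x)
    (hassoc₂ : ∀ x y z : V, μ₂ (μ₂ (x ⊗ₜ[K] y) ⊗ₜ[K] z) = μ₂ (x ⊗ₜ[K] μ₂ (y ⊗ₜ[K] z)))
    (hunitl₂ : ∀ x : V, μ₂ (e₂ ⊗ₜ[K] x) = x)
    (hunitr₂ : ∀ x : V, μ₂ (x ⊗ₜ[K] e₂) = x)
    -- the extension μ̃₂ of μ₂ to Ṽ = V × K with new unit e₁ = (0,1)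
    (m₂ : (V × K) ⊗[K] (V × K) →ₗ[K] V × K)
    (hm₂ : ∀ (v w : V) (a b : K),
      m₂ ((v, a) ⊗ₜ[K] (w, b)) = (μ₂ (v ⊗ₜ[K] w) + a • w + b • v, a * b))
    -- the first Kaplansky comultiplication Δ₁
    (Δ₁ : (V × K) →ₗ[K] (V × K) ⊗[K] (V × K))
    (hΔ₁ : ∀ (v : V) (a : K), Δ₁ (v, a) =
      a • (((0 : V), (1 : K)) ⊗ₜ[K] ((0 : V), (1 : K))) +
        (v, (0 : K)) ⊗ₜ[K] ((0 : V), (1 : K)) +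
        ((0 : V), (1 : K)) ⊗ₜ[K] (v, (0 : K)) -
        (e₂, (0 : K)) ⊗ₜ[K] (v, (0 : K))) :
    ∀ x y : V × K, Δ₁ (m₂ (x ⊗ₜ[K] y)) =
      TensorProduct.map m₂ m₂
        ((TensorProduct.tensorTensorTensorComm K (V × K) (V × K) (V × K) (V × K))
          (Δ₁ x ⊗ₜ[K] Δ₁ y)) := by
  rintro ⟨v, a⟩ ⟨w, b⟩
  have hadd : ∀ p q : V, ((p + q, (0:K)) : V × K) = (p, 0) + (q, 0) := by
    intro p q; simp [Prod.ext_iff]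
  have hsmul : ∀ (c : K) (p : V), ((c • p, (0:K)) : V × K) = c • (p, (0:K)) := by
    intro c p; simp [Prod.ext_iff]
  rw [hm₂, hΔ₁, hΔ₁, hΔ₁, hadd, hadd, hsmul, hsmul]
  simp only [tmul_add, add_tmul, tmul_sub, sub_tmul, smul_tmul', tmul_smul, map_add, map_sub,
    map_smul, tensorTensorTensorComm_tmul, map_tmul, hm₂, hunitl₂, hunitr₂, mul_one, one_mul,
    mul_zero, zero_mul, smul_zero, zero_smul, smul_tmul', zero_add, add_zero, one_smul,
    zero_tmul, tmul_zero]
  have hsm1 : ∀ c : K, c • ((((0 : V), (1 : K))) : V × K) = ((0 : V), c) := by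
    intro c; simp [Prod.ext_iff]
  simp only [smul_smul, hsm1, smul_zero, smul_eq_mul, mul_one, mul_zero, one_mul, zero_mul,
    map_zero, zero_add, add_zero, hm₂, hunitl₂, hunitr₂, hsmul, hadd, zero_smul, one_smul,
    ← smul_tmul', tmul_smul]
  have hsm2 : ∀ b c : K, b • ((((0 : V), c)) : V × K) = ((0 : V), b * c) := by
    intro b c; simp [Prod.ext_iff]
  simp only [Prod.mk.eta, hsm2, zero_tmul, map_zero, Prod.mk_zero_zero, zero_add, add_zero,
    mul_comm, hsmul]
  simp only [← smul_tmul']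
  module
end

section
/- On the 2-dimensional space with basis {e₁, e₂} and unit e₁, the multiplication μ₂² with μ₂²(e₂ ⊗ e₂) = 0 admits no bialgebra structure: there is no coassociative counital Δ : V → V ⊗ V which is an algebra morphism for μ₂² with Δ(e₁) = e₁ ⊗ e₁. -/
open TensorProduct

private lemma expand_tensor (K : Type*) [Field K] (t : (K × K) ⊗[K] (K × K)) :
    ∃ a b c d : K, t =
      a • (((1:K),(0:K)) ⊗ₜ[K] ((1:K),(0:K))) + b • (((1:K),(0:K)) ⊗ₜ[K] ((0:K),(1:K))) +
      c • (((0:K),(1:K)) ⊗ₜ[K] ((1:K),(0:K))) + d • (((0:K),(1:K)) ⊗ₜ[K] ((0:K),(1:K))) := by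
  induction t using TensorProduct.induction_on with
  | zero => exact ⟨0,0,0,0, by simp⟩
  | tmul x y =>
    refine ⟨x.1*y.1, x.1*y.2, x.2*y.1, x.2*y.2, ?_⟩
    have hx : x = x.1 • ((1:K),(0:K)) + x.2 • ((0:K),(1:K)) := by ext <;> simp
    have hy : y = y.1 • ((1:K),(0:K)) + y.2 • ((0:K),(1:K)) := by ext <;> simp
    conv_lhs => rw [hx, hy]
    simp only [tmul_add, add_tmul, smul_tmul, tmul_smul, smul_smul]
    module
  | add s t hs ht =>
    obtain ⟨a,b,c,d, hs⟩ := hs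
    obtain ⟨a',b',c',d', ht⟩ := ht
    refine ⟨a+a', b+b', c+c', d+d', ?_⟩
    rw [hs, ht]; module

set_option maxHeartbeats 1000000 in
set_option synthInstance.maxHeartbeats 200000 in
/-- The 2-dimensional algebra μ₂² (with μ(e₂⊗e₂)=0, unit e₁) admits no bialgebra
structure with Δ(e₁) = e₁ ⊗ e₁. -/
theorem stmt_13 (K : Type*) [Field K] [CharZero K]
    (e₁ e₂ : K × K) (he₁ : e₁ = ((1 : K), (0 : K))) (he₂ : e₂ = ((0 : K), (1 : K)))
    (μ : (K × K) ⊗[K] (K × K) →ₗ[K] K × K)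
    (h11 : μ (e₁ ⊗ₜ[K] e₁) = e₁) (h12 : μ (e₁ ⊗ₜ[K] e₂) = e₂)
    (h21 : μ (e₂ ⊗ₜ[K] e₁) = e₂) (h22 : μ (e₂ ⊗ₜ[K] e₂) = 0) :
    ¬ ∃ (Δ : (K × K) →ₗ[K] (K × K) ⊗[K] (K × K)) (ε : (K × K) →ₗ[K] K),
      Δ e₁ = e₁ ⊗ₜ[K] e₁ ∧ ε e₁ = 1 ∧
      (∀ x : K × K,
        (TensorProduct.assoc K (K × K) (K × K) (K × K))
            (TensorProduct.map Δ LinearMap.id (Δ x)) =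
          TensorProduct.map LinearMap.id Δ (Δ x)) ∧
      (∀ x : K × K,
        (TensorProduct.lid K (K × K)) (TensorProduct.map ε LinearMap.id (Δ x)) = x) ∧
      (∀ x : K × K,
        (TensorProduct.rid K (K × K)) (TensorProduct.map LinearMap.id ε (Δ x)) = x) ∧
      (∀ x y : K × K, Δ (μ (x ⊗ₜ[K] y)) =
        TensorProduct.map μ μ
          ((TensorProduct.tensorTensorTensorComm K (K × K) (K × K) (K × K) (K × K))
            (Δ x ⊗ₜ[K] Δ y))) ∧
      (∀ x y : K × K, ε (μ (x ⊗ₜ[K] y)) = ε x * ε y) := by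
  subst he₁ he₂
  rintro ⟨Δ, ε, hΔ1, hε1, -, hl, hr, hmul, hεmul⟩
  -- ε(e₂) = 0
  have ht : ε ((0:K),(1:K)) = 0 := by
    have := hεmul ((0:K),(1:K)) ((0:K),(1:K))
    rw [h22, map_zero] at this
    exact (mul_self_eq_zero.mp this.symm)
  -- expand Δ e₂
  obtain ⟨a, b, c, d, hD⟩ := expand_tensor K (Δ ((0:K),(1:K)))
  -- counit axioms
  have hL := hl ((0:K),(1:K))
  have hR := hr ((0:K),(1:K))
  rw [hD] at hL hR
  simp only [map_add, map_smul, TensorProduct.map_tmul, LinearMap.id_coe, id_eq,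
    hε1, ht, lid_tmul, rid_tmul, smul_smul, Prod.ext_iff, Prod.smul_mk,
    Prod.fst_add, Prod.snd_add, smul_eq_mul, mul_zero, mul_one, zero_smul,
    smul_zero, add_zero, zero_add] at hL hR
  -- multiplicativity of Δ at e₂ ⊗ e₂
  have hM := hmul ((0:K),(1:K)) ((0:K),(1:K))
  rw [h22, map_zero, hD] at hM
  -- apply the functional x ⊗ y ↦ x.2 * y.2
  set φ : (K × K) ⊗[K] (K × K) →ₗ[K] K :=
    TensorProduct.lift (LinearMap.mk₂ K (fun x y => x.2 * y.2)
      (by intros; simp [add_mul]) (by intros; simp [mul_assoc])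
      (by intros; simp [mul_add]) (by intros; simp; ring)) with hφ
  have hM2 := congrArg φ hM
  simp only [map_zero, map_add, map_smul, tmul_add, add_tmul, smul_tmul, tmul_smul,
    TensorProduct.tensorTensorTensorComm_tmul, TensorProduct.map_tmul,
    h11, h12, h21, h22, hφ, lift.tmul, LinearMap.mk₂_apply, smul_eq_mul,
    zero_tmul, tmul_zero, Prod.snd_zero, zero_mul, mul_zero, one_mul, mul_one,
    zero_add, add_zero] at hM2
  obtain ⟨hL1, hL2⟩ := hL
  obtain ⟨hR1, hR2⟩ := hR
  subst hL1 hL2 hR2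
  norm_num at hM2
end

section
/- On V = K³ with basis {e₁, e₂, e₃}, the multiplication μ₄³ with e₁ a two-sided unit and all other products of basis vectors equal to zero (μ(eᵢ⊗eⱼ) = 0 for i, j ∈ {2,3}) is associative, and it admits no bialgebra structure: no coassociative counital comultiplication Δ with Δ(e₁) = e₁ ⊗ e₁ can be an algebra morphism for μ₄³. -/
open TensorProduct

set_option maxHeartbeats 1000000
set_option synthInstance.maxHeartbeats 400000

/-- The functional on `V ⊗ V` given by `a ⊗ b ↦ a j * b k`. -/
noncomputable def Pf (K : Type*) [Field K] (j k : Fin 3) :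
    (Fin 3 → K) ⊗[K] (Fin 3 → K) →ₗ[K] K :=
  (TensorProduct.lid K K).toLinearMap ∘ₗ
    TensorProduct.map (LinearMap.proj j) (LinearMap.proj k)

lemma Pf_tmul (K : Type*) [Field K] (j k : Fin 3) (a b : Fin 3 → K) :
    Pf K j k (a ⊗ₜ[K] b) = a j * b k := by
  simp [Pf, smul_eq_mul]

/-- The 3-dimensional algebra μ₄³ (e₁ a two-sided unit, all other products of basis
vectors zero) is associative but admits no bialgebra structure with Δ(e₁)=e₁⊗e₁. -/
theorem stmt_17 (K : Type*) [Field K] [CharZero K]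
    (e : Fin 3 → (Fin 3 → K)) (he : ∀ i, e i = Pi.single i 1)
    (μ : (Fin 3 → K) ⊗[K] (Fin 3 → K) →ₗ[K] (Fin 3 → K))
    (hunit : ∀ x : Fin 3 → K, μ (e 0 ⊗ₜ[K] x) = x ∧ μ (x ⊗ₜ[K] e 0) = x)
    (hzero : ∀ i j : Fin 3, i ≠ 0 → j ≠ 0 → μ (e i ⊗ₜ[K] e j) = 0) :
    (∀ x y z : Fin 3 → K, μ (μ (x ⊗ₜ[K] y) ⊗ₜ[K] z) = μ (x ⊗ₜ[K] μ (y ⊗ₜ[K] z))) ∧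
    ¬ ∃ (Δ : (Fin 3 → K) →ₗ[K] (Fin 3 → K) ⊗[K] (Fin 3 → K)) (ε : (Fin 3 → K) →ₗ[K] K),
      Δ (e 0) = e 0 ⊗ₜ[K] e 0 ∧ ε (e 0) = 1 ∧
      (∀ x : Fin 3 → K,
        (TensorProduct.assoc K (Fin 3 → K) (Fin 3 → K) (Fin 3 → K))
            (TensorProduct.map Δ LinearMap.id (Δ x)) =
          TensorProduct.map LinearMap.id Δ (Δ x)) ∧
      (∀ x : Fin 3 → K,
        (TensorProduct.lid K (Fin 3 → K)) (TensorProduct.map ε LinearMap.id (Δ x)) = x) ∧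
      (∀ x : Fin 3 → K,
        (TensorProduct.rid K (Fin 3 → K)) (TensorProduct.map LinearMap.id ε (Δ x)) = x) ∧
      (∀ x y : Fin 3 → K, Δ (μ (x ⊗ₜ[K] y)) =
        TensorProduct.map μ μ
          ((TensorProduct.tensorTensorTensorComm K (Fin 3 → K) (Fin 3 → K) (Fin 3 → K) (Fin 3 → K))
            (Δ x ⊗ₜ[K] Δ y))) ∧
      (∀ x y : Fin 3 → K, ε (μ (x ⊗ₜ[K] y)) = ε x * ε y) := by
  have hμ : ∀ x y : Fin 3 → K, μ (x ⊗ₜ[K] y) = x 0 • y + y 0 • x - (x 0 * y 0) • e 0 := by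
    intro x y
    have hx : x = x 0 • e 0 + x 1 • e 1 + x 2 • e 2 := by
      funext i; fin_cases i <;> simp [he, Pi.single]
    have hy : y = y 0 • e 0 + y 1 • e 1 + y 2 • e 2 := by
      funext i; fin_cases i <;> simp [he, Pi.single]
    conv_lhs => rw [hx, hy]
    simp only [TensorProduct.add_tmul, TensorProduct.tmul_add, ← TensorProduct.smul_tmul',
      TensorProduct.tmul_smul, map_add, map_smul, (hunit _).1, (hunit _).2,
      hzero 1 1 one_ne_zero one_ne_zero, hzero 1 2 one_ne_zero (by decide),
      hzero 2 1 (by decide) one_ne_zero, hzero 2 2 (by decide) (by decide), smul_zero]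
    funext i; fin_cases i <;> simp [he, Pi.single] <;> ring
  constructor
  · intro x y z
    rw [hμ y z, hμ x y, hμ, hμ]
    funext i; fin_cases i <;> simp [he, Pi.single] <;> ring
  · rintro ⟨Δ, ε, hΔ0, hε0, hcoass, hcoL, hcoR, hmul, hεmul⟩
    have hε1 : ε (e 1) = 0 := by
      have h := hεmul (e 1) (e 1)
      rw [hzero 1 1 one_ne_zero one_ne_zero, map_zero] at h
      exact mul_self_eq_zero.mp h.symm
    have hε2 : ε (e 2) = 0 := by
      have h := hεmul (e 2) (e 2)
      rw [hzero 2 2 (by decide) (by decide), map_zero] at h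
      exact mul_self_eq_zero.mp h.symm
    have hεx : ∀ b : Fin 3 → K, ε b = b 0 := by
      intro b
      have hb : b = b 0 • e 0 + b 1 • e 1 + b 2 • e 2 := by
        funext i; fin_cases i <;> simp [he, Pi.single]
      conv_lhs => rw [hb]
      simp [hε0, hε1, hε2]
    -- the right counit identity computes `Pf K j 0`
    have hmapR : ∀ (T : (Fin 3 → K) ⊗[K] (Fin 3 → K)) (j : Fin 3),
        ((TensorProduct.rid K (Fin 3 → K)) (TensorProduct.map LinearMap.id ε T)) j
          = Pf K j 0 T := by
      intro T j
      induction T using TensorProduct.induction_on with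
      | zero => simp
      | tmul a b => simp [Pf_tmul, hεx b, mul_comm]
      | add S T hS hT => simp only [map_add, Pi.add_apply, hS, hT]
    -- the left counit identity computes `Pf K 0 k`
    have hmapL : ∀ (T : (Fin 3 → K) ⊗[K] (Fin 3 → K)) (k : Fin 3),
        ((TensorProduct.lid K (Fin 3 → K)) (TensorProduct.map ε LinearMap.id T)) k
          = Pf K 0 k T := by
      intro T k
      induction T using TensorProduct.induction_on with
      | zero => simp
      | tmul a b => simp [Pf_tmul, hεx a]
      | add S T hS hT => simp only [map_add, Pi.add_apply, hS, hT]
    have hP00 : Pf K 0 0 (Δ (e 1)) = 0 := by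
      rw [← hmapR (Δ (e 1)) 0, hcoR (e 1)]; simp [he, Pi.single]
    have hP10 : Pf K 1 0 (Δ (e 1)) = 1 := by
      rw [← hmapR (Δ (e 1)) 1, hcoR (e 1)]; simp [he, Pi.single]
    have hP01 : Pf K 0 1 (Δ (e 1)) = 1 := by
      rw [← hmapL (Δ (e 1)) 1, hcoL (e 1)]; simp [he, Pi.single]
    -- key bilinear computation
    have hG : ∀ S T : (Fin 3 → K) ⊗[K] (Fin 3 → K),
        Pf K 1 1 (TensorProduct.map μ μ
          ((TensorProduct.tensorTensorTensorComm K (Fin 3 → K) (Fin 3 → K) (Fin 3 → K)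
              (Fin 3 → K)) (S ⊗ₜ[K] T)))
          = Pf K 0 0 S * Pf K 1 1 T + Pf K 0 1 S * Pf K 1 0 T
            + Pf K 1 0 S * Pf K 0 1 T + Pf K 1 1 S * Pf K 0 0 T := by
      intro S T
      induction S using TensorProduct.induction_on with
      | zero => simp
      | add S1 S2 h1 h2 =>
        simp only [TensorProduct.add_tmul, map_add, h1, h2]; ring
      | tmul a b =>
        induction T using TensorProduct.induction_on with
        | zero => simp
        | add T1 T2 h1 h2 =>
          simp only [TensorProduct.tmul_add, map_add, h1, h2]; ring
        | tmul c d =>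
          rw [TensorProduct.tensorTensorTensorComm_tmul]
          rw [TensorProduct.map_tmul]
          simp only [Pf_tmul]
          rw [hμ a c, hμ b d]
          simp [he, Pi.single]
          ring
    have h0 : Pf K 1 1 (TensorProduct.map μ μ
        ((TensorProduct.tensorTensorTensorComm K (Fin 3 → K) (Fin 3 → K) (Fin 3 → K)
            (Fin 3 → K)) (Δ (e 1) ⊗ₜ[K] Δ (e 1)))) = 0 := by
      have h := hmul (e 1) (e 1)
      rw [hzero 1 1 one_ne_zero one_ne_zero, map_zero] at h
      rw [← h, map_zero]
    rw [hG, hP00, hP01, hP10] at h0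
    norm_num at h0
end

section
/- The tensor algebra T(V) with concatenation product and deconcatenation coproduct Δ(v₁⋯vₙ) = Σ_{i=0}^{n} (v₁⋯vᵢ) ⊗ (v_{i+1}⋯vₙ) satisfies the unital infinitesimal relation: Δ(a·b) = (a ⊗ 1)·Δ(b) + Δ(a)·(1 ⊗ b) − a ⊗ b for all a, b ∈ T(V), where · on T(V) ⊗ T(V) is the componentwise concatenation product. -/
open TensorProduct

/-- The tensor algebra T(V) with concatenation product and deconcatenation coproduct
satisfies the unital infinitesimal relation. -/
theorem stmt_19 (K : Type*) [Field K] (V : Type*) [AddCommGroup V] [Module K V]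
    (Δ : TensorAlgebra K V →ₗ[K] TensorAlgebra K V ⊗[K] TensorAlgebra K V)
    (hΔ : ∀ l : List V,
      Δ (l.map (TensorAlgebra.ι K)).prod =
        ∑ i ∈ Finset.range (l.length + 1),
          ((l.take i).map (TensorAlgebra.ι K)).prod ⊗ₜ[K]
            ((l.drop i).map (TensorAlgebra.ι K)).prod) :
    ∀ a b : TensorAlgebra K V,
      Δ (a * b) = (a ⊗ₜ[K] 1) * Δ b + Δ a * (1 ⊗ₜ[K] b) - a ⊗ₜ[K] b := by
  intro a b
  set ι := TensorAlgebra.ι K (M := V)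
  set S : Set (TensorAlgebra K V) := Set.range fun l : List V => (l.map ι).prod with hS
  -- every element lies in the span of list products
  have hspan : ∀ x : TensorAlgebra K V, x ∈ Submodule.span K S := by
    have hmulS : ∀ x y : TensorAlgebra K V, x ∈ Submodule.span K S →
        y ∈ Submodule.span K S → x * y ∈ Submodule.span K S := by
      intro x y hx hy
      induction hx, hy using Submodule.span_induction₂ with
      | mem_mem u v hu hv =>
          obtain ⟨l, rfl⟩ := hu
          obtain ⟨m, rfl⟩ := hv
          refine Submodule.subset_span ⟨l ++ m, ?_⟩
          simp [List.map_append, List.prod_append]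
      | zero_left v hv => simp
      | zero_right u hu => simp
      | add_left u v w _ _ _ h1 h2 => rw [add_mul]; exact Submodule.add_mem _ h1 h2
      | add_right u v w _ _ _ h1 h2 => rw [mul_add]; exact Submodule.add_mem _ h1 h2
      | smul_left r u v _ _ h => rw [smul_mul_assoc]; exact Submodule.smul_mem _ _ h
      | smul_right r u v _ _ h => rw [mul_smul_comm]; exact Submodule.smul_mem _ _ h
    intro x
    induction x using TensorAlgebra.induction with
    | algebraMap r =>
        rw [Algebra.algebraMap_eq_smul_one]
        exact Submodule.smul_mem _ _ (Submodule.subset_span ⟨[], by simp⟩)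
    | ι v => exact Submodule.subset_span ⟨[v], by simp [ι]⟩
    | mul x y hx hy => exact hmulS x y hx hy
    | add x y hx hy => exact Submodule.add_mem _ hx hy
  -- the key combinatorial identity for list products
  have key : ∀ l m : List V,
      Δ ((l.map ι).prod * (m.map ι).prod) =
        ((l.map ι).prod ⊗ₜ[K] 1) * Δ ((m.map ι).prod) +
          Δ ((l.map ι).prod) * (1 ⊗ₜ[K] (m.map ι).prod) -
          (l.map ι).prod ⊗ₜ[K] (m.map ι).prod := by
    intro l m
    have hc : (l.map ι).prod * (m.map ι).prod = ((l ++ m).map ι).prod := by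
      simp [List.map_append, List.prod_append]
    rw [hc, hΔ (l ++ m), hΔ l, hΔ m]
    rw [Finset.mul_sum, Finset.sum_mul]
    have hlen : (l ++ m).length + 1 = l.length + (m.length + 1) := by
      simp [List.length_append]; omega
    rw [hlen, Finset.sum_range_add]
    have hright : ∀ i ∈ Finset.range (l.length + 1),
        ((l.take i).map ι).prod ⊗ₜ[K] ((l.drop i).map ι).prod * (1 ⊗ₜ[K] (m.map ι).prod) =
          (((l ++ m).take i).map ι).prod ⊗ₜ[K] (((l ++ m).drop i).map ι).prod := by
      intro i hi
      have hi' : i ≤ l.length := Nat.lt_succ_iff.mp (Finset.mem_range.mp hi)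
      rw [Algebra.TensorProduct.tmul_mul_tmul, mul_one,
        List.take_append_of_le_length hi', List.drop_append_of_le_length hi',
        List.map_append, List.prod_append]
    have hleft : ∀ j ∈ Finset.range (m.length + 1),
        ((l.map ι).prod ⊗ₜ[K] 1) * (((m.take j).map ι).prod ⊗ₜ[K] ((m.drop j).map ι).prod) =
          (((l ++ m).take (l.length + j)).map ι).prod ⊗ₜ[K]
            (((l ++ m).drop (l.length + j)).map ι).prod := by
      intro j _
      rw [Algebra.TensorProduct.tmul_mul_tmul, one_mul,
        List.take_length_add_append, List.drop_length_add_append, List.map_append, List.prod_append]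
    rw [Finset.sum_congr rfl hright, Finset.sum_congr rfl hleft]
    have hsp : ∑ i ∈ Finset.range (l.length + 1),
        (((l ++ m).take i).map ι).prod ⊗ₜ[K] (((l ++ m).drop i).map ι).prod =
        (∑ i ∈ Finset.range l.length,
          (((l ++ m).take i).map ι).prod ⊗ₜ[K] (((l ++ m).drop i).map ι).prod) +
          (((l ++ m).take l.length).map ι).prod ⊗ₜ[K]
            (((l ++ m).drop l.length).map ι).prod := Finset.sum_range_succ _ _
    have htd : (((l ++ m).take l.length).map ι).prod ⊗ₜ[K]
        (((l ++ m).drop l.length).map ι).prod = (l.map ι).prod ⊗ₜ[K] (m.map ι).prod := by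
      rw [List.take_left, List.drop_left]
    rw [hsp, htd]
    abel
  -- bilinear extension
  induction hspan a, hspan b using Submodule.span_induction₂ with
  | mem_mem u v hu hv =>
      obtain ⟨l, rfl⟩ := hu
      obtain ⟨m, rfl⟩ := hv
      exact key l m
  | zero_left v hv => simp
  | zero_right u hu => simp
  | add_left u v w _ _ _ h1 h2 =>
      rw [add_mul, map_add, h1, h2]
      simp only [map_add, add_tmul, add_mul, mul_add, tmul_add]
      abel
  | add_right u v w _ _ _ h1 h2 =>
      rw [mul_add, map_add, h1, h2]
      simp only [map_add, add_tmul, add_mul, mul_add, tmul_add]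
      abel
  | smul_left r u v _ _ h =>
      rw [smul_mul_assoc, map_smul, h]
      simp only [map_smul, ← smul_tmul', smul_mul_assoc, smul_sub, smul_add]
  | smul_right r u v _ _ h =>
      rw [mul_smul_comm, map_smul, h]
      simp only [map_smul, tmul_smul, mul_smul_comm, smul_mul_assoc, smul_sub, smul_add]
end
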